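/- Let f: V → R^d assign to each node of a finite graph the limiting aggregation m_v = e_v (e^T X) under symmetric normalization on the full connected graph G. Suppose instead each node v uses a subgraph extractor returning the induced subgraph on its closed 1-hop neighborhood, yielding m'_v = e'_v ((e')^T X') computed within that subgraph. Then for nodes u, v with equal full-graph degree but non-isomorphic closed 1-hop neighborhood induced subgraphs and generic features X (drawn from an absolutely continuous distribution), m'_u ≠ m'_v almost surely, while m_u = m_v deterministically. -/

import Mathlib

open Matrix MeasureTheory

/-- Consider the limiting full-graph GCN aggregation m_v = e_v (eᵀ X) and the subgraph
(1-hop ego-net) version m'_v = e'_v ((e')ᵀ X), where e'_[v] is the Perron eigenvector (padded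
with zeros) of the symmetrically normalized adjacency (with self-loops) of the induced
subgraph on the closed 1-hop neighborhood N[v]. For nodes u, v with equal full-graph degree
but non-isomorphic ego-nets and features X with columns drawn from an absolutely continuous
distribution: m'_u ≠ m'_v almost surely, while m_u = m_v deterministically. -/
theorem stmt18 (n dF : ℕ) (hn : 0 < n) (hdF : 0 < dF)
    (A : Matrix (Fin n) (Fin n) ℝ) (hsym : A.IsSymm)
    (h01 : ∀ i j, A i j = 0 ∨ A i j = 1) (hloopless : ∀ i, A i i = 0)
    (hconn : ∀ i j : Fin n, ∃ k : ℕ, 0 < ((A + 1) ^ k) i j)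
    (d : Fin n → ℝ) (hd : ∀ i, d i = 1 + ∑ j, A i j)
    (e : Fin n → ℝ) (he : ∀ w, e w = Real.sqrt (d w / ∑ x, d x))
    (e' : Fin n → Fin n → ℝ)
    (hsupp : ∀ v w, ¬ (w = v ∨ A v w = 1) → e' v w = 0)
    (hpos : ∀ v w, (w = v ∨ A v w = 1) → 0 < e' v w)
    (hnorm : ∀ v, ∑ w, (e' v w) ^ 2 = 1)
    (heig : ∀ v : Fin n,
      Matrix.mulVec
        (Matrix.of fun a b =>
          if (a = v ∨ A v a = 1) ∧ (b = v ∨ A v b = 1) then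
            ((A + 1) a b) /
              (Real.sqrt (∑ x, if (a = v ∨ A v a = 1) ∧ (x = v ∨ A v x = 1)
                  then (A + 1) a x else 0) *
               Real.sqrt (∑ x, if (b = v ∨ A v b = 1) ∧ (x = v ∨ A v x = 1)
                  then (A + 1) b x else 0))
          else 0)
        (e' v) = e' v)
    (μ : Measure (Fin n → ℝ)) [IsProbabilityMeasure μ] (hac : μ ≪ volume)
    (u v : Fin n) (hdeg : d u = d v)
    (hniso : ¬ ∃ σ : {w : Fin n // w = u ∨ A u w = 1} ≃ {w : Fin n // w = v ∨ A v w = 1},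
      ∀ a b : {w : Fin n // w = u ∨ A u w = 1}, A a.val b.val = A (σ a).val (σ b).val) :
    (∀ X : Fin dF → Fin n → ℝ,
      (fun j => e u * ∑ w, e w * X j w) = (fun j => e v * ∑ w, e w * X j w)) ∧
    (∀ᵐ X ∂(Measure.pi fun _ : Fin dF => μ),
      (fun j => e' u u * ∑ w, e' u w * X j w) ≠ (fun j => e' v v * ∑ w, e' v w * X j w)) := by
  constructor
  · intro X
    have heq : e u = e v := by rw [he, he, hdeg]
    funext j
    rw [heq]
  · -- coefficient vectors differ
    have hne : ∃ w0, e' u u * e' u w0 ≠ e' v v * e' v w0 := by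
      by_contra hcon
      push_neg at hcon
      have huu : 0 < e' u u := hpos u u (Or.inl rfl)
      have hvv : 0 < e' v v := hpos v v (Or.inl rfl)
      set t : ℝ := e' v v / e' u u with ht
      have hprop : ∀ w, e' u w = t * e' v w := by
        intro w
        have := hcon w
        rw [ht, div_mul_eq_mul_div, eq_div_iff huu.ne']
        linarith
      have hsum : (1:ℝ) = t ^ 2 * 1 := by
        calc (1:ℝ) = ∑ w, (e' u w) ^ 2 := (hnorm u).symm
        _ = ∑ w, t ^ 2 * (e' v w) ^ 2 := by
            refine Finset.sum_congr rfl fun w _ => by rw [hprop w]; ring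
        _ = t ^ 2 * ∑ w, (e' v w) ^ 2 := by rw [Finset.mul_sum]
        _ = t ^ 2 * 1 := by rw [hnorm v]
      have htpos : 0 < t := div_pos hvv huu
      have ht1 : t = 1 := by nlinarith
      have heq' : ∀ w, e' u w = e' v w := fun w => by rw [hprop w, ht1, one_mul]
      have hNuv : ∀ w, (w = u ∨ A u w = 1) ↔ (w = v ∨ A v w = 1) := by
        intro w
        constructor
        · intro hw
          by_contra hc
          have h0 := hsupp v w hc
          have h1 := hpos u w hw
          rw [heq' w, h0] at h1
          exact lt_irrefl 0 h1
        · intro hw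
          by_contra hc
          have h0 := hsupp u w hc
          have h1 := hpos v w hw
          rw [← heq' w, h0] at h1
          exact lt_irrefl 0 h1
      exact hniso ⟨⟨fun a => ⟨a.val, (hNuv a.val).1 a.prop⟩,
        fun a => ⟨a.val, (hNuv a.val).2 a.prop⟩,
        fun a => rfl, fun a => rfl⟩, fun a b => rfl⟩
    obtain ⟨w0, hw0⟩ := hne
    set c : Fin n → ℝ := fun w => e' u u * e' u w - e' v v * e' v w with hc
    have hcw0 : c w0 ≠ 0 := sub_ne_zero.mpr hw0
    -- the hyperplane has μ-measure zero
    set l : (Fin n → ℝ) →ₗ[ℝ] ℝ :=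
      { toFun := fun x => ∑ w, c w * x w
        map_add' := by
          intro x y
          simp only [Pi.add_apply, mul_add]
          rw [Finset.sum_add_distrib]
        map_smul' := by
          intro r x
          simp only [Pi.smul_apply, smul_eq_mul, RingHom.id_apply, Finset.mul_sum]
          refine Finset.sum_congr rfl fun w _ => by ring } with hl
    have hker : LinearMap.ker l ≠ ⊤ := by
      intro h
      have : l (Pi.single w0 1) = 0 := by
        rw [LinearMap.ker_eq_top.mp h]; rfl
      simp only [hl, LinearMap.coe_mk, AddHom.coe_mk] at this
      rw [Finset.sum_eq_single w0] at this
      · simp at this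
        exact hcw0 this
      · intro b _ hb
        simp [Pi.single_eq_of_ne hb]
      · intro h'
        exact absurd (Finset.mem_univ w0) h'
    have hvol : volume ((LinearMap.ker l : Submodule ℝ (Fin n → ℝ)) : Set (Fin n → ℝ)) = 0 :=
      Measure.addHaar_submodule volume _ hker
    have hμ : μ {x : Fin n → ℝ | ∑ w, c w * x w = 0} = 0 := by
      refine hac ?_
      refine measure_mono_null ?_ hvol
      intro x hx
      exact LinearMap.mem_ker.mpr hx
    have j0 : Fin dF := ⟨0, hdF⟩
    have hpi : (Measure.pi fun _ : Fin dF => μ)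
        (Function.eval j0 ⁻¹' {x : Fin n → ℝ | ∑ w, c w * x w = 0}) = 0 :=
      Measure.pi_eval_preimage_null _ hμ
    rw [MeasureTheory.ae_iff]
    refine measure_mono_null ?_ hpi
    intro X hX
    simp only [Set.mem_setOf_eq, not_not] at hX
    have := congrFun hX j0
    simp only [Set.mem_preimage, Function.eval, Set.mem_setOf_eq, hc]
    have expand : ∑ w, (e' u u * e' u w - e' v v * e' v w) * X j0 w
        = e' u u * ∑ w, e' u w * X j0 w - e' v v * ∑ w, e' v w * X j0 w := by
      rw [Finset.mul_sum, Finset.mul_sum, ← Finset.sum_sub_distrib]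
      refine Finset.sum_congr rfl fun w _ => by ring
    rw [expand, this, sub_self]
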